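/- Let q be a prime power, b a positive integer, and let A = ⊕_i ⊕_j J_{f_i^{e_{i,j}}} ∈ F_q^{n×n} be a block-diagonal matrix, where the f_i ∈ F_q[x] are distinct monic irreducible polynomials, the e_{i,j} are positive integers nonincreasing in j, and J_{f^e} denotes the Jordan block of f^e. Then P(A) = Π_i P(⊕_j J_{f_i^{e_{i,j}}}), where P of each matrix is computed with the same block size b and each ⊕_j J_{f_i^{e_{i,j}}} is viewed as a square matrix of its own dimension. -/

import Mathlib

open Matrix Polynomial

/-- `p` annihilates the matrix sequence `S`, i.e. `p(S) = 0`: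
for every `k`, `∑ i, (coeff p i) • S (i + k) = 0`. -/
def AnnPoly {F : Type} [Field F] {α β : Type} (p : Polynomial F)
    (S : ℕ → Matrix α β F) : Prop :=
  ∀ k : ℕ, (p.sum fun i a => a • S (i + k)) = 0

open scoped Classical in
/-- The minimal generating polynomial of a matrix sequence: the unique monic
polynomial annihilating `S` that divides every annihilator of `S`
(`0` if no such polynomial exists). -/
noncomputable def seqMinpoly {F : Type} [Field F] {α β : Type}
    (S : ℕ → Matrix α β F) : Polynomial F :=
  if h : ∃ p : Polynomial F, p.Monic ∧ AnnPoly p S ∧ ∀ g : Polynomial F, AnnPoly g S → p ∣ g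
  then h.choose else 0

/-- `pmp F b A` : the fraction of pairs `(U, V)` for which the projected sequence
`(U * A^k * V)_k` has the same minimal polynomial as the sequence `(A^k)_k`. -/
noncomputable def pmp (F : Type) [Field F] [Fintype F] (b : ℕ)
    {ι : Type} [Fintype ι] [DecidableEq ι] (A : Matrix ι ι F) : ℚ :=
  (Nat.card {UV : Matrix (Fin b) ι F × Matrix ι (Fin b) F //
      seqMinpoly (fun k => UV.1 * A ^ k * UV.2) = seqMinpoly (fun k => A ^ k)} : ℚ) /
  (Nat.card (Matrix (Fin b) ι F × Matrix ι (Fin b) F) : ℚ)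

/-- The companion matrix of a monic polynomial `f` of degree `d`:
ones on the subdiagonal, last column `(-f_0, …, -f_{d-1})ᵀ`. -/
def companion {F : Type} [Field F] (d : ℕ) (f : Polynomial F) :
    Matrix (Fin d) (Fin d) F :=
  Matrix.of fun i j => (if (i : ℕ) = (j : ℕ) + 1 then 1 else 0) +
    (if (j : ℕ) = d - 1 then -f.coeff (i : ℕ) else 0)

/-- The Jordan block `J_{f^e}` of `f^e` (`f` of degree `d`): `e` diagonal blocks `C_f`
and identity blocks on the first block subdiagonal. -/
def jordanBlock {F : Type} [Field F] (d e : ℕ) (f : Polynomial F) :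
    Matrix (Fin e × Fin d) (Fin e × Fin d) F :=
  Matrix.of fun p q =>
    if p.1 = q.1 then companion d f p.2 q.2
    else if (p.1 : ℕ) = (q.1 : ℕ) + 1 then (if p.2 = q.2 then 1 else 0) else 0



namespace Stmt3Aux
variable {F : Type} [Field F] {α β : Type}

/-- Apply a polynomial to a sequence. -/
noncomputable def papp (p : Polynomial F) (S : ℕ → Matrix α β F) : ℕ → Matrix α β F :=
  fun k => p.sum fun i a => a • S (i + k)

theorem annPoly_iff (p : Polynomial F) (S : ℕ → Matrix α β F) :
    AnnPoly p S ↔ papp p S = 0 := by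
  constructor
  · intro h; funext k; exact h k
  · intro h k; exact congrFun h k

theorem papp_zero (S : ℕ → Matrix α β F) : papp (0 : Polynomial F) S = 0 := by
  funext k; simp [papp]

theorem papp_add (p q : Polynomial F) (S : ℕ → Matrix α β F) :
    papp (p + q) S = papp p S + papp q S := by
  funext k
  simpa [papp] using Polynomial.sum_add_index p q (fun i a => a • S (i + k))
    (fun i => zero_smul F _) (fun a b₁ b₂ => add_smul b₁ b₂ _)

theorem papp_monomial (n : ℕ) (a : F) (S : ℕ → Matrix α β F) :
    papp (monomial n a) S = fun k => a • S (n + k) := by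
  funext k
  simpa [papp] using Polynomial.sum_monomial_index a (fun i b => b • S (i + k)) (zero_smul F _)

theorem papp_seq_zero (p : Polynomial F) : papp p (0 : ℕ → Matrix α β F) = 0 := by
  funext k; simp [papp, Polynomial.sum]

theorem papp_seq_add (p : Polynomial F) (S T : ℕ → Matrix α β F) :
    papp p (S + T) = papp p S + papp p T := by
  funext k; simp [papp, Polynomial.sum, Pi.add_apply, smul_add, Finset.sum_add_distrib]

theorem papp_seq_sum {ι : Type*} (p : Polynomial F) (s : Finset ι) (T : ι → ℕ → Matrix α β F) :
    papp p (fun k => ∑ i ∈ s, T i k) = fun k => ∑ i ∈ s, papp p (T i) k := by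
  funext k
  simp only [papp, Polynomial.sum, Finset.smul_sum]
  exact Finset.sum_comm

theorem papp_mul (p q : Polynomial F) (S : ℕ → Matrix α β F) :
    papp (p * q) S = papp p (papp q S) := by
  induction p using Polynomial.induction_on' with
  | add p p' hp hp' =>
      rw [add_mul, papp_add, papp_add, hp, hp']
  | monomial n a =>
      induction q using Polynomial.induction_on' with
      | add q q' hq hq' =>
          rw [mul_add, papp_add, papp_add, hq, hq', ← papp_seq_add]
      | monomial m b =>
          rw [monomial_mul_monomial, papp_monomial, papp_monomial, papp_monomial]
          funext k
          show (a * b) • S (n + m + k) = a • b • S (m + (n + k))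
          rw [show n + m + k = m + (n + k) by omega, mul_smul]

theorem papp_one (S : ℕ → Matrix α β F) : papp (1 : Polynomial F) S = S := by
  have : (1 : Polynomial F) = monomial 0 1 := by simp
  rw [this, papp_monomial]
  simp

/-- The annihilator ideal of a sequence. -/
noncomputable def annIdeal (S : ℕ → Matrix α β F) : Ideal (Polynomial F) where
  carrier := {p | papp p S = 0}
  add_mem' := by
    intro p q hp hq
    simp only [Set.mem_setOf_eq] at *
    rw [papp_add, hp, hq, add_zero]
  zero_mem' := papp_zero S
  smul_mem' := by
    intro c p hp
    simp only [Set.mem_setOf_eq, smul_eq_mul] at *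
    rw [papp_mul, hp, papp_seq_zero]

theorem mem_annIdeal_iff {S : ℕ → Matrix α β F} {p : Polynomial F} :
    p ∈ annIdeal S ↔ AnnPoly p S := (annPoly_iff p S).symm

theorem annPoly_of_dvd {S : ℕ → Matrix α β F} {p g : Polynomial F}
    (hp : AnnPoly p S) (hdvd : p ∣ g) : AnnPoly g S := by
  rw [← mem_annIdeal_iff] at *
  obtain ⟨c, rfl⟩ := hdvd
  rw [mul_comm]
  exact Ideal.mul_mem_left _ c hp

theorem seqMinpoly_eq {S : ℕ → Matrix α β F} {m : Polynomial F} (hm : m.Monic)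
    (hann : AnnPoly m S) (hdvd : ∀ g : Polynomial F, AnnPoly g S → m ∣ g) :
    seqMinpoly S = m := by
  classical
  have h : ∃ p : Polynomial F, p.Monic ∧ AnnPoly p S ∧ ∀ g : Polynomial F, AnnPoly g S → p ∣ g :=
    ⟨m, hm, hann, hdvd⟩
  rw [seqMinpoly, dif_pos h]
  obtain ⟨hmon, hann', hdvd'⟩ := h.choose_spec
  exact Polynomial.eq_of_monic_of_associated hmon hm
    (associated_of_dvd_dvd (hdvd' m hann) (hdvd _ hann'))

/-- Existence of a minimal annihilating polynomial, given some nonzero annihilator. -/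
theorem exists_min {S : ℕ → Matrix α β F} {p : Polynomial F} (hp : p ≠ 0) (hann : AnnPoly p S) :
    ∃ m : Polynomial F, m.Monic ∧ AnnPoly m S ∧ ∀ g : Polynomial F, AnnPoly g S → m ∣ g := by
  classical
  set I := annIdeal S with hI
  have hpI : p ∈ I := mem_annIdeal_iff.mpr hann
  have hgen := Submodule.IsPrincipal.generator_mem I
  set g := Submodule.IsPrincipal.generator I with hg
  have hgne : g ≠ 0 := by
    intro h0
    have := (Submodule.IsPrincipal.mem_iff_generator_dvd I).mp hpI
    rw [← hg, h0] at this
    exact hp (zero_dvd_iff.mp this)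
  refine ⟨g * C g.leadingCoeff⁻¹, Polynomial.monic_mul_leadingCoeff_inv hgne, ?_, ?_⟩
  · exact mem_annIdeal_iff.mp (Ideal.mul_mem_right _ _ hgen)
  · intro q hq
    have hqI : q ∈ I := mem_annIdeal_iff.mpr hq
    have : g ∣ q := (Submodule.IsPrincipal.mem_iff_generator_dvd I).mp hqI
    refine (Associated.dvd_iff_dvd_left ?_).mpr this
    exact (associated_mul_unit_right g _ (Polynomial.isUnit_C.mpr
      (isUnit_iff_ne_zero.mpr (inv_ne_zero (Polynomial.leadingCoeff_ne_zero.mpr hgne))))).symm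

theorem seqMinpoly_spec {S : ℕ → Matrix α β F} {p : Polynomial F} (hp : p ≠ 0)
    (hann : AnnPoly p S) :
    (seqMinpoly S).Monic ∧ AnnPoly (seqMinpoly S) S ∧
      ∀ g : Polynomial F, AnnPoly g S → seqMinpoly S ∣ g := by
  obtain ⟨m, hm, hma, hmd⟩ := exists_min hp hann
  rw [seqMinpoly_eq hm hma hmd]
  exact ⟨hm, hma, hmd⟩


section MatrixSeq

variable {ι : Type} [Fintype ι] [DecidableEq ι]

theorem papp_pow_eq (M : Matrix ι ι F) (p : Polynomial F) (k : ℕ) :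
    papp p (fun k => M ^ k) k = aeval M p * M ^ k := by
  rw [papp, aeval_def, eval₂_eq_sum, Polynomial.sum_def, Polynomial.sum_def, Finset.sum_mul]
  refine Finset.sum_congr rfl fun i _ => ?_
  rw [pow_add, ← Algebra.smul_def, Matrix.smul_mul]

theorem annPoly_pow_iff (M : Matrix ι ι F) (p : Polynomial F) :
    AnnPoly p (fun k => M ^ k) ↔ aeval M p = 0 := by
  rw [annPoly_iff]
  constructor
  · intro h
    have := congrFun h 0
    rw [papp_pow_eq, pow_zero, mul_one] at this
    exact this
  · intro h
    funext k
    rw [papp_pow_eq, h, zero_mul]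
    rfl

theorem annPoly_UV {γ δ : Type} [Fintype α] [Fintype β] {S : ℕ → Matrix α β F}
    {p : Polynomial F} (U : Matrix γ α F) (V : Matrix β δ F) (h : AnnPoly p S) :
    AnnPoly p (fun k => U * S k * V) := by
  intro k
  have : (p.sum fun i a => a • (U * S (i + k) * V)) = U * (p.sum fun i a => a • S (i + k)) * V := by
    rw [Polynomial.sum_def, Polynomial.sum_def, Matrix.mul_sum, Matrix.sum_mul]
    refine Finset.sum_congr rfl fun i _ => ?_
    rw [Matrix.mul_smul, Matrix.smul_mul]
  rw [this, h k, Matrix.mul_zero, Matrix.zero_mul]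

theorem sum_mulVec {ι' m n : Type} [Fintype n] (s : Finset ι') (M : ι' → Matrix m n F)
    (v : n → F) : (∑ i ∈ s, M i) *ᵥ v = ∑ i ∈ s, M i *ᵥ v := by
  funext j
  rw [Finset.sum_apply]
  simp only [Matrix.mulVec, dotProduct, Matrix.sum_apply, Finset.sum_mul]
  rw [Finset.sum_comm]

end MatrixSeq

section Companion

theorem matrix_eq_zero_of_cols {n : Type} [Fintype n] [DecidableEq n] {m : Type}
    (M : Matrix m n F) (h : ∀ j : n, M *ᵥ Pi.single j 1 = 0) : M = 0 := by
  ext i j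
  have := congrFun (h j) i
  rw [Matrix.mulVec_single] at this
  simpa using this

variable (f : Polynomial F)

theorem companion_mulVec_single_lt (j : Fin f.natDegree) (h : (j : ℕ) + 1 < f.natDegree) :
    companion f.natDegree f *ᵥ Pi.single j 1 =
      Pi.single (⟨(j : ℕ) + 1, h⟩ : Fin f.natDegree) 1 := by
  rw [Matrix.mulVec_single]
  funext i
  have hj : (j : ℕ) ≠ f.natDegree - 1 := by omega
  rw [Pi.single_apply]
  simp only [companion, Matrix.of_apply, if_neg hj, add_zero, mul_one]
  congr 1
  simp [Fin.ext_iff, hj]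

theorem companion_mulVec_single_last (hd : 0 < f.natDegree) :
    companion f.natDegree f *ᵥ
        Pi.single (⟨f.natDegree - 1, by omega⟩ : Fin f.natDegree) 1 =
      fun i : Fin f.natDegree => -f.coeff (i : ℕ) := by
  rw [Matrix.mulVec_single]
  funext i
  have hi : (i : ℕ) ≠ (f.natDegree - 1) + 1 := by have := i.isLt; omega
  simp only [companion, Matrix.of_apply, mul_one, if_neg hi, if_pos rfl, zero_add, if_true]
  simp [hi]

theorem companion_pow_mulVec (hd : 0 < f.natDegree) (k : ℕ) (hk : k < f.natDegree) :
    companion f.natDegree f ^ k *ᵥ Pi.single (⟨0, hd⟩ : Fin f.natDegree) 1 =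
      Pi.single (⟨k, hk⟩ : Fin f.natDegree) 1 := by
  induction k with
  | zero => rw [pow_zero, Matrix.one_mulVec]
  | succ k ih =>
      have hk' : k < f.natDegree := by omega
      rw [pow_succ', ← Matrix.mulVec_mulVec, ih hk', companion_mulVec_single_lt]

theorem aeval_pow_commute {A : Type*} [Ring A] [Algebra F A] (x : A) (g : Polynomial F)
    (j : ℕ) : aeval x g * x ^ j = x ^ j * aeval x g := by
  have h1 : x ^ j = aeval x ((X : Polynomial F) ^ j) := by rw [map_pow, aeval_X]
  rw [h1, ← _root_.map_mul, ← _root_.map_mul, mul_comm]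

theorem aeval_companion (hf : f.Monic) (hd : 0 < f.natDegree) :
    aeval (companion f.natDegree f) f = 0 := by
  have e0 : aeval (companion f.natDegree f) f *ᵥ Pi.single (⟨0, hd⟩ : Fin f.natDegree) 1
      = 0 := by
    rw [aeval_eq_sum_range, sum_mulVec, Finset.sum_range_succ]
    simp only [Matrix.smul_mulVec]
    have hlast : companion f.natDegree f ^ f.natDegree *ᵥ
        Pi.single (⟨0, hd⟩ : Fin f.natDegree) 1
        = fun i : Fin f.natDegree => -f.coeff (i : ℕ) := by
      have hp : companion f.natDegree f * companion f.natDegree f ^ (f.natDegree - 1)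
          = companion f.natDegree f ^ f.natDegree := by
        rw [← pow_succ']; congr 1; omega
      rw [← hp, ← Matrix.mulVec_mulVec, companion_pow_mulVec f hd _ (by omega),
        companion_mulVec_single_last f hd]
    have hrest : ∑ i ∈ Finset.range f.natDegree,
        f.coeff i • (companion f.natDegree f ^ i *ᵥ Pi.single (⟨0, hd⟩ : Fin f.natDegree) 1)
        = fun r : Fin f.natDegree => f.coeff (r : ℕ) := by
      rw [← Fin.sum_univ_eq_sum_range (fun i => f.coeff i •
        (companion f.natDegree f ^ i *ᵥ Pi.single (⟨0, hd⟩ : Fin f.natDegree) 1)) f.natDegree]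
      funext r
      rw [Finset.sum_apply]
      have hterm : ∀ i : Fin f.natDegree, (f.coeff (i : ℕ) •
          (companion f.natDegree f ^ (i : ℕ) *ᵥ Pi.single (⟨0, hd⟩ : Fin f.natDegree) 1)) r
          = if r = i then f.coeff (i : ℕ) else 0 := by
        intro i
        rw [companion_pow_mulVec f hd (i : ℕ) i.isLt, Fin.eta, Pi.smul_apply, Pi.single_apply]
        simp [mul_ite]
      simp only [hterm]
      simp
    rw [hrest, hlast, hf.coeff_natDegree, one_smul]
    funext r
    simp
  apply matrix_eq_zero_of_cols
  intro j
  have hj : (Pi.single j 1 : Fin f.natDegree → F)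
      = companion f.natDegree f ^ (j : ℕ) *ᵥ Pi.single (⟨0, hd⟩ : Fin f.natDegree) 1 := by
    rw [companion_pow_mulVec f hd _ j.isLt, Fin.eta]
  rw [hj, Matrix.mulVec_mulVec, aeval_pow_commute, ← Matrix.mulVec_mulVec, e0,
    Matrix.mulVec_zero]

end Companion

section Jordan

variable {d e : ℕ}

/-- Block-lower-triangular with all diagonal blocks equal to `h`. -/
def IsBlk (M : Matrix (Fin e × Fin d) (Fin e × Fin d) F)
    (h : Matrix (Fin d) (Fin d) F) : Prop :=
  (∀ p q : Fin e × Fin d, (p.1 : ℕ) < (q.1 : ℕ) → M p q = 0) ∧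
  (∀ p q : Fin e × Fin d, p.1 = q.1 → M p q = h p.2 q.2)

theorem isBlk_one : IsBlk (1 : Matrix (Fin e × Fin d) (Fin e × Fin d) F) 1 := by
  constructor
  · intro p q hlt
    exact Matrix.one_apply_ne (fun hh => by rw [hh] at hlt; omega)
  · intro p q h1
    rw [Matrix.one_apply, Matrix.one_apply]
    by_cases h2 : p.2 = q.2
    · rw [if_pos (Prod.ext h1 h2), if_pos h2]
    · rw [if_neg (fun hh => h2 (by rw [hh])), if_neg h2]

theorem isBlk_add {M M' : Matrix (Fin e × Fin d) (Fin e × Fin d) F}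
    {h h' : Matrix (Fin d) (Fin d) F} (hM : IsBlk M h) (hM' : IsBlk M' h') :
    IsBlk (M + M') (h + h') := by
  refine ⟨fun p q hlt => ?_, fun p q heq => ?_⟩
  · rw [Matrix.add_apply, hM.1 p q hlt, hM'.1 p q hlt, add_zero]
  · rw [Matrix.add_apply, hM.2 p q heq, hM'.2 p q heq]; rfl

theorem isBlk_smul {M : Matrix (Fin e × Fin d) (Fin e × Fin d) F}
    {h : Matrix (Fin d) (Fin d) F} (a : F) (hM : IsBlk M h) :
    IsBlk (a • M) (a • h) := by
  refine ⟨fun p q hlt => ?_, fun p q heq => ?_⟩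
  · rw [Matrix.smul_apply, hM.1 p q hlt, smul_zero]
  · rw [Matrix.smul_apply, hM.2 p q heq]; rfl

theorem isBlk_mul {M M' : Matrix (Fin e × Fin d) (Fin e × Fin d) F}
    {h h' : Matrix (Fin d) (Fin d) F} (hM : IsBlk M h) (hM' : IsBlk M' h') :
    IsBlk (M * M') (h * h') := by
  constructor
  · intro p q hlt
    rw [Matrix.mul_apply]
    apply Finset.sum_eq_zero
    intro r _
    by_cases hr : (p.1 : ℕ) < (r.1 : ℕ)
    · rw [hM.1 p r hr, zero_mul]
    · rw [hM'.1 r q (by omega), mul_zero]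
  · intro p q hpq
    have hpq' : (p.1 : ℕ) = (q.1 : ℕ) := by rw [hpq]
    rw [Matrix.mul_apply, Matrix.mul_apply, Fintype.sum_prod_type]
    rw [Finset.sum_eq_single p.1]
    · refine Finset.sum_congr rfl fun r2 _ => ?_
      rw [hM.2 p (p.1, r2) rfl, hM'.2 (p.1, r2) q hpq]
    · intro r1 _ hne
      apply Finset.sum_eq_zero
      intro r2 _
      have hne' : (r1 : ℕ) ≠ (p.1 : ℕ) := fun hh => hne (Fin.ext hh)
      by_cases hlt : (p.1 : ℕ) < (r1 : ℕ)
      · rw [hM.1 p (r1, r2) hlt, zero_mul]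
      · rw [hM'.1 (r1, r2) q (show (r1 : ℕ) < (q.1 : ℕ) by omega), mul_zero]
    · intro habs
      exact absurd (Finset.mem_univ p.1) habs

theorem isBlk_pow {M : Matrix (Fin e × Fin d) (Fin e × Fin d) F}
    {h : Matrix (Fin d) (Fin d) F} (hM : IsBlk M h) (n : ℕ) : IsBlk (M ^ n) (h ^ n) := by
  induction n with
  | zero => rw [pow_zero, pow_zero]; exact isBlk_one
  | succ n ih => rw [pow_succ, pow_succ]; exact isBlk_mul ih hM

theorem isBlk_aeval {M : Matrix (Fin e × Fin d) (Fin e × Fin d) F}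
    {h : Matrix (Fin d) (Fin d) F} (hM : IsBlk M h) (g : Polynomial F) :
    IsBlk (aeval M g) (aeval h g) := by
  induction g using Polynomial.induction_on' with
  | add p q hp hq => rw [map_add, map_add]; exact isBlk_add hp hq
  | monomial n a =>
      rw [Polynomial.aeval_monomial, Polynomial.aeval_monomial, ← Algebra.smul_def,
        ← Algebra.smul_def]
      exact isBlk_smul a (isBlk_pow hM n)

theorem strict_pow_zero {M : Matrix (Fin e × Fin d) (Fin e × Fin d) F}
    (hs : ∀ p q : Fin e × Fin d, (p.1 : ℕ) ≤ (q.1 : ℕ) → M p q = 0) : M ^ e = 0 := by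
  have key : ∀ (m : ℕ) (p q : Fin e × Fin d), (p.1 : ℕ) < (q.1 : ℕ) + m → (M ^ m) p q = 0 := by
    intro m
    induction m with
    | zero =>
        intro p q h
        rw [pow_zero]
        exact Matrix.one_apply_ne (fun hh => by rw [hh] at h; omega)
    | succ m ih =>
        intro p q h
        rw [pow_succ, Matrix.mul_apply]
        apply Finset.sum_eq_zero
        intro r _
        by_cases hr : (p.1 : ℕ) < (r.1 : ℕ) + m
        · rw [ih p r hr, zero_mul]
        · rw [hs r q (by omega), mul_zero]
  ext p q
  have := key e p q (by have := p.1.isLt; omega)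
  simpa using this

theorem isBlk_jordan (f : Polynomial F) : IsBlk (jordanBlock d e f) (companion d f) := by
  constructor
  · intro p q hlt
    have h1 : p.1 ≠ q.1 := fun hh => by rw [hh] at hlt; omega
    have h2 : (p.1 : ℕ) ≠ (q.1 : ℕ) + 1 := by omega
    simp only [jordanBlock, Matrix.of_apply, if_neg h1, if_neg h2]
  · intro p q hpq
    simp only [jordanBlock, Matrix.of_apply, if_pos hpq]

theorem aeval_jordanBlock_pow_eq_zero (f : Polynomial F) (hf : f.Monic)
    (hd : 0 < f.natDegree) (e : ℕ) :
    aeval (jordanBlock f.natDegree e f) (f ^ e) = 0 := by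
  rw [map_pow]
  have hblk := isBlk_aeval (isBlk_jordan (d := f.natDegree) (e := e) f) f
  rw [aeval_companion f hf hd] at hblk
  apply strict_pow_zero
  intro p q hle
  rcases Nat.lt_or_ge (p.1 : ℕ) (q.1 : ℕ) with hlt | hge
  · exact hblk.1 p q hlt
  · have heq : p.1 = q.1 := Fin.ext (by omega)
    rw [hblk.2 p q heq]
    rfl

end Jordan

section SumMin

variable {γ : Type} [Fintype γ] [DecidableEq γ]

theorem seqMinpoly_sum (T : γ → ℕ → Matrix α β F) (m : γ → Polynomial F)
    (hmon : ∀ i, (m i).Monic) (hann : ∀ i, AnnPoly (m i) (T i))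
    (hmin : ∀ i g, AnnPoly g (T i) → m i ∣ g)
    (hcop : ∀ i j, i ≠ j → IsCoprime (m i) (m j)) :
    seqMinpoly (fun k => ∑ i, T i k) = ∏ i, m i := by
  apply seqMinpoly_eq (Polynomial.monic_prod_of_monic _ _ fun i _ => hmon i)
  · rw [annPoly_iff, papp_seq_sum]
    funext k
    apply Finset.sum_eq_zero
    intro i _
    exact congrFun ((annPoly_iff _ _).mp (annPoly_of_dvd (hann i)
      (Finset.dvd_prod_of_mem m (Finset.mem_univ i)))) k
  · intro g hg
    refine Finset.prod_dvd_of_coprime (fun i _ j _ hij => hcop i j hij) fun j _ => ?_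
    have h1 : papp (∏ i ∈ Finset.univ.erase j, m i) (fun k => ∑ i, T i k)
        = papp (∏ i ∈ Finset.univ.erase j, m i) (T j) := by
      rw [papp_seq_sum]
      funext k
      rw [Finset.sum_eq_single j]
      · intro i _ hne
        have hd : m i ∣ ∏ i ∈ Finset.univ.erase j, m i :=
          Finset.dvd_prod_of_mem m (Finset.mem_erase.mpr ⟨hne, Finset.mem_univ i⟩)
        exact congrFun ((annPoly_iff _ _).mp (annPoly_of_dvd (hann i) hd)) k
      · intro h; exact absurd (Finset.mem_univ j) h
    have h2 : AnnPoly (g * ∏ i ∈ Finset.univ.erase j, m i) (T j) := by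
      rw [annPoly_iff, papp_mul, ← h1, ← papp_mul, mul_comm, papp_mul,
        (annPoly_iff g _).mp hg, papp_seq_zero]
    have h4 : IsCoprime (m j) (∏ i ∈ Finset.univ.erase j, m i) :=
      IsCoprime.prod_right fun i hi => hcop j i (Finset.ne_of_mem_erase hi).symm
    exact h4.dvd_of_dvd_mul_right (hmin j _ h2)

end SumMin

section BlockDiag

variable {ι : Type} [Fintype ι] [DecidableEq ι] {κ : ι → Type}
  [∀ i, Fintype (κ i)] [∀ i, DecidableEq (κ i)]

theorem aeval_blockDiagonal' (M : ∀ i, Matrix (κ i) (κ i) F) (p : Polynomial F) :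
    aeval (Matrix.blockDiagonal' M) p = Matrix.blockDiagonal' (fun i => aeval (M i) p) := by
  induction p using Polynomial.induction_on' with
  | add p q hp hq =>
      rw [map_add, hp, hq, ← Matrix.blockDiagonal'_add]
      refine congrArg Matrix.blockDiagonal' ?_
      funext i
      exact (map_add (aeval (M i)) p q).symm
  | monomial n a =>
      rw [Polynomial.aeval_monomial, ← Algebra.smul_def, ← Matrix.blockDiagonal'_pow,
        ← Matrix.blockDiagonal'_smul]
      refine congrArg Matrix.blockDiagonal' ?_
      funext i
      rw [Polynomial.aeval_monomial, ← Algebra.smul_def]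
      rfl

theorem blockDiagonal'_eq_zero_iff {M : ∀ i, Matrix (κ i) (κ i) F} :
    Matrix.blockDiagonal' M = 0 ↔ ∀ i, M i = 0 := by
  constructor
  · intro h i
    ext a b
    have : Matrix.blockDiagonal' M ⟨i, a⟩ ⟨i, b⟩ = 0 := by rw [h]; rfl
    rw [Matrix.blockDiagonal'_apply_eq] at this
    exact this
  · intro h
    rw [show M = 0 from funext h, Matrix.blockDiagonal'_zero]

theorem annPoly_blockDiagonal'_pow_iff (M : ∀ i, Matrix (κ i) (κ i) F) (p : Polynomial F) :
    AnnPoly p (fun k => Matrix.blockDiagonal' M ^ k) ↔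
      ∀ i, AnnPoly p (fun k => M i ^ k) := by
  rw [annPoly_pow_iff, aeval_blockDiagonal', blockDiagonal'_eq_zero_iff]
  exact forall_congr' fun i => (annPoly_pow_iff _ _).symm

theorem seqMinpoly_blockDiagonal' (M : ∀ i, Matrix (κ i) (κ i) F) (m : ι → Polynomial F)
    (hmon : ∀ i, (m i).Monic) (hann : ∀ i, AnnPoly (m i) (fun k => M i ^ k))
    (hmin : ∀ i g, AnnPoly g (fun k => M i ^ k) → m i ∣ g)
    (hcop : ∀ i j, i ≠ j → IsCoprime (m i) (m j)) :
    seqMinpoly (fun k => Matrix.blockDiagonal' M ^ k) = ∏ i, m i := by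
  apply seqMinpoly_eq (Polynomial.monic_prod_of_monic _ _ fun i _ => hmon i)
  · rw [annPoly_blockDiagonal'_pow_iff]
    intro i
    exact annPoly_of_dvd (hann i) (Finset.dvd_prod_of_mem m (Finset.mem_univ i))
  · intro g hg
    rw [annPoly_blockDiagonal'_pow_iff] at hg
    exact Finset.prod_dvd_of_coprime (fun i _ j _ hij => hcop i j hij)
      fun i _ => hmin i g (hg i)

theorem mul_blockDiagonal'_mul {b : ℕ} (U : Matrix (Fin b) ((i : ι) × κ i) F)
    (M : ∀ i, Matrix (κ i) (κ i) F) (V : Matrix ((i : ι) × κ i) (Fin b) F) :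
    U * Matrix.blockDiagonal' M * V =
      ∑ i, (U.submatrix id (Sigma.mk i)) * M i * (V.submatrix (Sigma.mk i) id) := by
  ext r c
  rw [Matrix.sum_apply, Matrix.mul_apply]
  have hcol : ∀ y : (i : ι) × κ i, (U * Matrix.blockDiagonal' M) r y
      = ∑ a, U r ⟨y.1, a⟩ * M y.1 a y.2 := by
    rintro ⟨j, y2⟩
    rw [Matrix.mul_apply, ← Finset.univ_sigma_univ, Finset.sum_sigma]
    rw [Finset.sum_eq_single j]
    · exact Finset.sum_congr rfl fun a _ => by rw [Matrix.blockDiagonal'_apply_eq]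
    · intro i _ hne
      exact Finset.sum_eq_zero fun a _ => by
        rw [Matrix.blockDiagonal'_apply_ne _ _ _ hne, mul_zero]
    · intro h; exact absurd (Finset.mem_univ j) h
  simp only [hcol]
  rw [← Finset.univ_sigma_univ, Finset.sum_sigma]
  refine Finset.sum_congr rfl fun i _ => ?_
  rw [Matrix.mul_apply]
  refine Finset.sum_congr rfl fun y2 _ => ?_
  rw [Matrix.mul_apply]
  rfl

end BlockDiag

section Main

variable [Fintype F] {ι : Type} [Fintype ι] [DecidableEq ι] {κ : ι → Type}
  [∀ i, Fintype (κ i)] [∀ i, DecidableEq (κ i)]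

theorem pmp_blockDiagonal' (b : ℕ) (A : ∀ i, Matrix (κ i) (κ i) F)
    (f : ι → Polynomial F) (N : ι → ℕ)
    (hmonic : ∀ i, (f i).Monic) (hirr : ∀ i, Irreducible (f i))
    (hdist : Function.Injective f)
    (hannA : ∀ i, aeval (A i) (f i ^ N i) = 0) :
    pmp F b (Matrix.blockDiagonal' A) = ∏ i, pmp F b (A i) := by
  classical
  have hprime : ∀ i, Prime (f i) := fun i => (hirr i).prime
  have hfne : ∀ i i', i ≠ i' → ∀ a b' : ℕ, IsCoprime (f i ^ a) (f i' ^ b') := by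
    intro i i' hne a b'
    have hcop : IsCoprime (f i) (f i') := by
      rw [Irreducible.coprime_iff_not_dvd (hirr i)]
      intro hdvd
      exact hne (hdist (Polynomial.eq_of_monic_of_associated (hmonic i) (hmonic i')
        ((hirr i).associated_of_dvd (hirr i') hdvd)))
    exact hcop.pow
  have hpow_eq : ∀ {g : Polynomial F}, g.Monic → ∀ (i : ι) (n : ℕ),
      g ∣ f i ^ n → ∃ c, c ≤ n ∧ g = f i ^ c := by
    intro g hg i n hdvd
    obtain ⟨cc, hcn, hassoc⟩ := (dvd_prime_pow (hprime i) n).mp hdvd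
    exact ⟨cc, hcn, Polynomial.eq_of_monic_of_associated hg ((hmonic i).pow cc) hassoc⟩
  have hNann : ∀ i, AnnPoly (f i ^ N i) (fun k => A i ^ k) := fun i =>
    (annPoly_pow_iff _ _).mpr (hannA i)
  have hNe : ∀ i, (f i ^ N i) ≠ 0 := fun i => ((hmonic i).pow _).ne_zero
  have hspec := fun i => seqMinpoly_spec (hNe i) (hNann i)
  choose c hcle hc using fun i =>
    hpow_eq (hspec i).1 i (N i) ((hspec i).2.2 _ (hNann i))
  have hmcop : ∀ i i', i ≠ i' →
      IsCoprime (seqMinpoly (fun k => A i ^ k)) (seqMinpoly (fun k => A i' ^ k)) := by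
    intro i i' hne
    rw [hc i, hc i']
    exact hfne i i' hne _ _
  have hbig : seqMinpoly (fun k => Matrix.blockDiagonal' A ^ k)
      = ∏ i, seqMinpoly (fun k => A i ^ k) :=
    seqMinpoly_blockDiagonal' A _ (fun i => (hspec i).1) (fun i => (hspec i).2.1)
      (fun i g => (hspec i).2.2 g) hmcop
  have key : ∀ (U : Matrix (Fin b) ((i : ι) × κ i) F) (V : Matrix ((i : ι) × κ i) (Fin b) F),
      (seqMinpoly (fun k => U * Matrix.blockDiagonal' A ^ k * V)
        = seqMinpoly (fun k => Matrix.blockDiagonal' A ^ k))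
      ↔ ∀ i, seqMinpoly (fun k => U.submatrix id (Sigma.mk i) * A i ^ k *
          V.submatrix (Sigma.mk i) id) = seqMinpoly (fun k => A i ^ k) := by
    intro U V
    set T : ι → ℕ → Matrix (Fin b) (Fin b) F := fun i k =>
      U.submatrix id (Sigma.mk i) * A i ^ k * V.submatrix (Sigma.mk i) id with hT
    have hTm : ∀ i, AnnPoly (seqMinpoly (fun k => A i ^ k)) (T i) := fun i =>
      annPoly_UV _ _ ((hspec i).2.1)
    have hTspec := fun i => seqMinpoly_spec ((hspec i).1.ne_zero) (hTm i)
    have hm'd : ∀ i, seqMinpoly (T i) ∣ f i ^ N i := by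
      intro i
      refine dvd_trans ((hTspec i).2.2 _ (hTm i)) ?_
      rw [hc i]
      exact pow_dvd_pow _ (hcle i)
    choose dd hdle hdd using fun i => hpow_eq (hTspec i).1 i (N i) (hm'd i)
    have hseq : (fun k => U * Matrix.blockDiagonal' A ^ k * V) = fun k => ∑ i, T i k := by
      funext k
      rw [← Matrix.blockDiagonal'_pow, mul_blockDiagonal'_mul]
      rfl
    have hsum : seqMinpoly (fun k => U * Matrix.blockDiagonal' A ^ k * V)
        = ∏ i, seqMinpoly (T i) := by
      rw [hseq]
      exact seqMinpoly_sum T _ (fun i => (hTspec i).1) (fun i => (hTspec i).2.1)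
        (fun i g => (hTspec i).2.2 g)
        (by intro i j hij; rw [hdd i, hdd j]; exact hfne i j hij _ _)
    rw [hsum, hbig]
    constructor
    · intro hprod i
      have hd_le_c : ∀ i', dd i' * (f i').natDegree ≤ c i' * (f i').natDegree := by
        intro i'
        have h1 : seqMinpoly (T i') ∣ seqMinpoly (fun k => A i' ^ k) :=
          (hTspec i').2.2 _ (hTm i')
        have h2 := Polynomial.natDegree_le_of_dvd h1 ((hspec i').1.ne_zero)
        rw [hdd i', hc i', Polynomial.natDegree_pow, Polynomial.natDegree_pow] at h2
        exact h2
      have hdegsum : ∑ i', dd i' * (f i').natDegree = ∑ i', c i' * (f i').natDegree := by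
        have hcongr := congrArg Polynomial.natDegree hprod
        rw [Polynomial.natDegree_prod _ _ (fun i' _ => ((hTspec i').1).ne_zero),
          Polynomial.natDegree_prod _ _ (fun i' _ => ((hspec i').1).ne_zero)] at hcongr
        calc ∑ i', dd i' * (f i').natDegree
            = ∑ i', (seqMinpoly (T i')).natDegree := by
              refine Finset.sum_congr rfl fun i' _ => ?_
              rw [hdd i', Polynomial.natDegree_pow]
          _ = ∑ i', (seqMinpoly (fun k => A i' ^ k)).natDegree := hcongr
          _ = ∑ i', c i' * (f i').natDegree := by
              refine Finset.sum_congr rfl fun i' _ => ?_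
              rw [hc i', Polynomial.natDegree_pow]
      have heq := (Finset.sum_eq_sum_iff_of_le (fun i' _ => hd_le_c i')).mp hdegsum i
        (Finset.mem_univ i)
      have hdegpos : 0 < (f i).natDegree := (hirr i).natDegree_pos
      have hdc : dd i = c i := Nat.eq_of_mul_eq_mul_right hdegpos heq
      rw [hdd i, hc i, hdc]
    · intro hcomp
      exact Finset.prod_congr rfl fun i _ => hcomp i
  -- the pair-space equivalence
  let E : (Matrix (Fin b) ((i : ι) × κ i) F × Matrix ((i : ι) × κ i) (Fin b) F) ≃
      (∀ i, Matrix (Fin b) (κ i) F × Matrix (κ i) (Fin b) F) :=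
    { toFun := fun UV i => (UV.1.submatrix id (Sigma.mk i), UV.2.submatrix (Sigma.mk i) id)
      invFun := fun W => (Matrix.of fun r x => (W x.1).1 r x.2,
                          Matrix.of fun x cc => (W x.1).2 x.2 cc)
      left_inv := fun UV => by
        refine Prod.ext ?_ ?_
        · ext r x
          rfl
        · ext x cc
          rfl
      right_inv := fun W => by funext i; rfl }
  have hcard1 : Nat.card {UV : Matrix (Fin b) ((i : ι) × κ i) F ×
        Matrix ((i : ι) × κ i) (Fin b) F //
      seqMinpoly (fun k => UV.1 * Matrix.blockDiagonal' A ^ k * UV.2)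
        = seqMinpoly (fun k => Matrix.blockDiagonal' A ^ k)} =
      ∏ i, Nat.card {uv : Matrix (Fin b) (κ i) F × Matrix (κ i) (Fin b) F //
        seqMinpoly (fun k => uv.1 * A i ^ k * uv.2) = seqMinpoly (fun k => A i ^ k)} := by
    rw [← Nat.card_pi]
    apply Nat.card_congr
    exact (Equiv.subtypeEquiv E (fun UV => key UV.1 UV.2)).trans Equiv.subtypePiEquivPi
  have hcard2 : Nat.card (Matrix (Fin b) ((i : ι) × κ i) F ×
        Matrix ((i : ι) × κ i) (Fin b) F) =
      ∏ i, Nat.card (Matrix (Fin b) (κ i) F × Matrix (κ i) (Fin b) F) := by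
    rw [← Nat.card_pi]
    exact Nat.card_congr E
  simp only [pmp]
  rw [hcard1, hcard2, Nat.cast_prod, Nat.cast_prod, ← Finset.prod_div_distrib]

end Main
end Stmt3Aux

/-- For a block-diagonal matrix `A = ⊕ᵢ ⊕ⱼ J_{fᵢ^{e_{i,j}}}` with distinct monic
irreducible `fᵢ` and exponents nonincreasing in `j`, the probability of minpoly
preservation is the product over `i` of the probabilities for the primary
components `⊕ⱼ J_{fᵢ^{e_{i,j}}}`. -/
theorem stmt3 (F : Type) [Field F] [Fintype F] (b : ℕ) (hb : 0 < b)
    (ι : Type) [Fintype ι] [DecidableEq ι]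
    (t : ι → ℕ) (ht : ∀ i, 0 < t i)
    (f : ι → Polynomial F) (hmonic : ∀ i, (f i).Monic) (hirr : ∀ i, Irreducible (f i))
    (hdist : Function.Injective f)
    (e : (i : ι) → Fin (t i) → ℕ) (hepos : ∀ i j, 0 < e i j)
    (hmono : ∀ i, ∀ j j' : Fin (t i), j ≤ j' → e i j' ≤ e i j) :
    pmp F b (Matrix.blockDiagonal' fun i : ι =>
        Matrix.blockDiagonal' fun j : Fin (t i) =>
          jordanBlock (f i).natDegree (e i j) (f i)) =
      ∏ i : ι, pmp F b (Matrix.blockDiagonal' fun j : Fin (t i) =>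
          jordanBlock (f i).natDegree (e i j) (f i)) := by
  apply Stmt3Aux.pmp_blockDiagonal' b _ f (fun i => ∑ j, e i j) hmonic hirr hdist
  intro i
  rw [Stmt3Aux.aeval_blockDiagonal']
  rw [Stmt3Aux.blockDiagonal'_eq_zero_iff]
  intro j
  have hdvd : f i ^ e i j ∣ f i ^ (∑ j', e i j') :=
    pow_dvd_pow _ (Finset.single_le_sum (fun j' _ => Nat.zero_le _) (Finset.mem_univ j))
  obtain ⟨g, hg⟩ := hdvd
  rw [hg, _root_.map_mul, Stmt3Aux.aeval_jordanBlock_pow_eq_zero (f i) (hmonic i)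
    (hirr i).natDegree_pos (e i j), zero_mul]
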